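/- Let z ∈ ℚ₃(ζ)× (where ζ is a primitive cube root of unity, and ℚ₃(ζ)/ℚ₃ is the ramified quadratic extension) with norm N and trace T over ℚ₃. If N ∈ 1 + 3ℤ₃ and N(3 − T) ∈ 1 + 27ℤ₃, then z ∈ 1 + 3O, where O is the valuation ring. Conversely, if z ∈ 1 + 3O then N ∈ 1 + 3ℤ₃ and N(3 − T) ∈ 1 + 27ℤ₃. -/

import Mathlib

open Polynomial IsCyclotomicExtension

noncomputable instance : Algebra ℤ_[3] (CyclotomicField 3 ℚ_[3]) :=
  ((algebraMap ℚ_[3] (CyclotomicField 3 ℚ_[3])).comp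
    (algebraMap ℤ_[3] ℚ_[3])).toAlgebra

namespace LocalSupport

local notation "K" => CyclotomicField 3 ℚ_[3]
local notation "φ" => algebraMap ℚ_[3] K

instance : @IsScalarTower ℤ_[3] ℚ_[3] K _ _ Algebra.toSMul := IsScalarTower.of_algebraMap_eq' rfl

instance : FiniteDimensional ℚ_[3] K := IsCyclotomicExtension.finiteDimensional {3} ℚ_[3] K

/-! ### Padic norm helpers -/

theorem norm3 : ‖(3:ℚ_[3])‖ = (3:ℝ)⁻¹ := by
  have := @Padic.norm_p 3 ⟨by norm_num⟩
  norm_num at this ⊢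
  exact_mod_cast this

theorem norm2 : ‖(2:ℚ_[3])‖ = 1 := by
  have h1 : ‖((2:ℤ):ℚ_[3])‖ ≤ 1 := Padic.norm_int_le_one 2
  have h2 : ¬ ‖((2:ℤ):ℚ_[3])‖ < 1 := by
    rw [Padic.norm_intCast_lt_one_iff]
    norm_num
  push_cast at h1 h2
  linarith [lt_or_eq_of_le h1]

theorem norm_sq_ne (x : ℚ_[3]) : ‖x‖^2 ≠ (3:ℝ)⁻¹ := by
  rcases eq_or_ne x 0 with rfl | hx
  · norm_num
  · rw [Padic.norm_eq_zpow_neg_valuation hx]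
    rw [← zpow_natCast, ← zpow_mul]
    intro h
    rw [show ((3:ℝ)⁻¹) = (3:ℝ)^(-1 : ℤ) by norm_num] at h
    have := zpow_right_injective₀ (by norm_num : (0:ℝ) < 3) (by norm_num : (3:ℝ) ≠ 1) h
    omega

theorem norm_le_zpow_of_sq {x : ℚ_[3]} {m : ℤ} (h : ‖x‖^2 ≤ (3:ℝ)^(2*m+1)) : ‖x‖ ≤ (3:ℝ)^m := by
  rcases eq_or_ne x 0 with rfl | hx
  · rw [norm_zero]
    positivity
  · rw [Padic.norm_eq_zpow_neg_valuation hx] at h ⊢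
    rw [← zpow_natCast, ← zpow_mul] at h
    push_cast at h ⊢
    rw [zpow_le_zpow_iff_right₀ (by norm_num : (1:ℝ) < 3)] at h ⊢
    omega

/-! ### The cyclotomic field -/

theorem irr3 : Irreducible (cyclotomic 3 ℚ_[3]) := by
  rw [irreducible_iff_roots_eq_zero_of_degree_le_three]
  · rw [Multiset.eq_zero_iff_forall_notMem]
    intro r hr
    rw [mem_roots (cyclotomic_ne_zero 3 ℚ_[3]), IsRoot, cyclotomic_three, eval_add, eval_add,
      eval_pow, eval_X, eval_one] at hr
    have h2 : (2*r+1)^2 = -3 := by linear_combination 4*hr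
    have h3 : ‖(2*r+1)^2‖ = ‖(-3 : ℚ_[3])‖ := by rw [h2]
    rw [norm_neg, norm_pow, norm3] at h3
    exact norm_sq_ne _ h3
  · rw [natDegree_cyclotomic]; decide
  · rw [natDegree_cyclotomic]; decide

noncomputable def zet : K := IsCyclotomicExtension.zeta 3 ℚ_[3] K

theorem hzet : IsPrimitiveRoot (zet) (3:ℕ) := IsCyclotomicExtension.zeta_spec 3 ℚ_[3] K

noncomputable def pb : PowerBasis ℚ_[3] K := hzet.powerBasis ℚ_[3]

theorem minpoly_zet : minpoly ℚ_[3] zet = X^2 + X + 1 := by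
  have := hzet.minpoly_eq_cyclotomic_of_irreducible (n := 3) irr3
  rw [← this]; exact cyclotomic_three _

theorem pb_dim : pb.dim = 2 := by
  rw [pb, IsPrimitiveRoot.powerBasis_dim, minpoly_zet]
  compute_degree!

theorem zet_sq : zet^2 = -1 - zet := by
  have := minpoly.aeval ℚ_[3] zet
  rw [minpoly_zet] at this
  simp only [map_add, map_pow, aeval_X, aeval_one] at this
  linear_combination this

noncomputable def B : Module.Basis (Fin 2) ℚ_[3] K := pb.basis.reindex (finCongr pb_dim)

theorem pb_gen : pb.gen = zet := hzet.powerBasis_gen ℚ_[3]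

theorem B_zero : B 0 = 1 := by
  rw [B, Module.Basis.reindex_apply, PowerBasis.coe_basis]
  simp

theorem B_one : B 1 = zet := by
  rw [B, Module.Basis.reindex_apply, PowerBasis.coe_basis]
  have : (finCongr pb_dim).symm 1 = ⟨1, by rw [pb_dim]; norm_num⟩ := rfl
  rw [this]
  simp [pb_gen]

theorem exists_repr (z : K) : ∃ a b : ℚ_[3], z = φ a + φ b * zet := by
  refine ⟨B.repr z 0, B.repr z 1, ?_⟩
  conv_lhs => rw [← B.sum_repr z]
  rw [Fin.sum_univ_two, B_zero, B_one, Algebra.smul_def, Algebra.smul_def, mul_one]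

theorem repr_eq (c d : ℚ_[3]) :
    B.repr (φ c + φ d * zet) = Finsupp.single 0 c + Finsupp.single 1 d := by
  have : φ c + φ d * zet = c • B 0 + d • B 1 := by
    rw [B_zero, B_one, Algebra.smul_def, Algebra.smul_def, mul_one]
  rw [this, map_add, map_smul, map_smul, B.repr_self, B.repr_self]
  ext i
  simp [Finsupp.single_apply]

theorem norm_formula (c d : ℚ_[3]) :
    Algebra.norm ℚ_[3] (φ c + φ d * zet) = c^2 - c*d + d^2 := by
  rw [Algebra.norm_eq_matrix_det B, Matrix.det_fin_two]
  have h0 : (φ c + φ d * zet) * B 0 = φ c + φ d * zet := by rw [B_zero, mul_one]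
  have h1 : (φ c + φ d * zet) * B 1 = φ (-d) + φ (c - d) * zet := by
    rw [B_one, map_sub, map_neg]
    calc (φ c + φ d * zet) * zet = φ c * zet + φ d * (zet^2) := by ring
    _ = φ c * zet + φ d * (-1 - zet) := by rw [zet_sq]
    _ = -φ d + (φ c - φ d) * zet := by ring
  simp only [Algebra.leftMulMatrix_eq_repr_mul, h0, h1, repr_eq]
  simp [Finsupp.single_apply]
  ring

theorem trace_formula (c d : ℚ_[3]) :
    Algebra.trace ℚ_[3] K (φ c + φ d * zet) = 2*c - d := by
  rw [Algebra.trace_eq_matrix_trace B, Matrix.trace_fin_two]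
  have h0 : (φ c + φ d * zet) * B 0 = φ c + φ d * zet := by rw [B_zero, mul_one]
  have h1 : (φ c + φ d * zet) * B 1 = φ (-d) + φ (c - d) * zet := by
    rw [B_one, map_sub, map_neg]
    calc (φ c + φ d * zet) * zet = φ c * zet + φ d * (zet^2) := by ring
    _ = φ c * zet + φ d * (-1 - zet) := by rw [zet_sq]
    _ = -φ d + (φ c - φ d) * zet := by ring
  simp only [Algebra.leftMulMatrix_eq_repr_mul, h0, h1, repr_eq]
  simp [Finsupp.single_apply]
  ring

/-! ### Integrality -/

theorem int_norm_le {t : ℚ_[3]} (h : IsIntegral ℤ_[3] t) : ‖t‖ ≤ 1 := by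
  obtain ⟨y, hy⟩ := IsIntegrallyClosed.isIntegral_iff.mp h
  rw [← hy]
  exact y.2

theorem zet_integral : IsIntegral ℤ_[3] zet := by
  refine ⟨X^2 + X + 1, by monicity!, ?_⟩
  simp only [eval₂_add, eval₂_pow, eval₂_X, eval₂_one, zet_sq]
  ring

theorem isIntegral_coords (c d : ℚ_[3]) :
    IsIntegral ℤ_[3] (φ c + φ d * zet) ↔ ‖c‖ ≤ 1 ∧ ‖d‖ ≤ 1 := by
  have key : ∀ t : ℚ_[3], ‖t‖ ≤ 1 → IsIntegral ℤ_[3] (φ t) := by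
    intro t ht
    have : φ t = algebraMap ℤ_[3] K ⟨t, ht⟩ := by
      rfl
    rw [this]
    exact isIntegral_algebraMap
  constructor
  · intro h
    have hT : IsIntegral ℤ_[3] (Algebra.trace ℚ_[3] K (φ c + φ d * zet)) :=
      Algebra.isIntegral_trace h
    have hN : IsIntegral ℤ_[3] (Algebra.norm ℚ_[3] (φ c + φ d * zet)) :=
      Algebra.isIntegral_norm ℚ_[3] h
    rw [trace_formula] at hT
    rw [norm_formula] at hN
    have hT' := int_norm_le hT
    have hN' := int_norm_le hN
    have e3 : (3:ℚ_[3])*d^2 = 4*(c^2-c*d+d^2) - (2*c-d)^2 := by ring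
    have h4 : ‖(4:ℚ_[3])‖ ≤ 1 := by
      have := Padic.norm_int_le_one (p := 3) 4; push_cast at this; exact this
    have hd2 : ‖(3:ℚ_[3])*d^2‖ ≤ 1 := by
      rw [e3, sub_eq_add_neg]
      refine le_trans (Padic.nonarchimedean _ _) (max_le ?_ ?_)
      · rw [norm_mul]
        exact mul_le_one₀ h4 (norm_nonneg _) hN'
      · rw [norm_neg, norm_pow]
        exact pow_le_one₀ (norm_nonneg _) hT'
    rw [norm_mul, norm3, norm_pow] at hd2
    have hd : ‖d‖ ≤ 1 := by
      have := norm_le_zpow_of_sq (x := d) (m := 0)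
      rw [show (3:ℝ)^(2*(0:ℤ)+1) = 3 by norm_num, show (3:ℝ)^(0:ℤ) = 1 by norm_num] at this
      apply this
      nlinarith [norm_nonneg d]
    refine ⟨?_, hd⟩
    have e2 : (2:ℚ_[3])*c = (2*c-d) + d := by ring
    have : ‖(2:ℚ_[3])*c‖ ≤ 1 := by
      rw [e2]
      exact le_trans (Padic.nonarchimedean _ _) (max_le hT' hd)
    rwa [norm_mul, norm2, one_mul] at this
  · rintro ⟨hc, hd⟩
    exact (key c hc).add ((key d hd).mul zet_integral)

theorem coe_norm_le (y : ℤ_[3]) : ‖(y : ℚ_[3])‖ ≤ 1 := y.2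

theorem coe_ofNat' {n : ℕ} [n.AtLeastTwo] :
    ((no_index (OfNat.ofNat n) : ℤ_[3]) : ℚ_[3]) = OfNat.ofNat n := rfl

end LocalSupport

open LocalSupport

theorem local_support_at_three (z : CyclotomicField 3 ℚ_[3]) (hz : z ≠ 0) :
    ((∃ n : ℤ_[3], Algebra.norm ℚ_[3] z = 1 + 3 * (n : ℚ_[3])) ∧
      (∃ τ : ℤ_[3], Algebra.norm ℚ_[3] z *
          (3 - Algebra.trace ℚ_[3] (CyclotomicField 3 ℚ_[3]) z) = 1 + 27 * (τ : ℚ_[3]))) ↔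
    ∃ y : CyclotomicField 3 ℚ_[3], IsIntegral ℤ_[3] y ∧ z = 1 + 3 * y := by
  have h3K : (3 : CyclotomicField 3 ℚ_[3]) = algebraMap ℚ_[3] _ 3 :=
    (map_ofNat (algebraMap ℚ_[3] (CyclotomicField 3 ℚ_[3])) 3).symm
  constructor
  · rintro ⟨⟨n, hN⟩, ⟨τ, hτ⟩⟩
    obtain ⟨a, b, rfl⟩ := exists_repr z
    rw [norm_formula] at hN hτ
    rw [trace_formula] at hτ
    set N : ℚ_[3] := a^2 - a*b + b^2 with hNdef
    have E1 : N*(2*(a-1) - b) = 3*(n:ℚ_[3]) - 27*(τ:ℚ_[3]) := by linear_combination hN - hτ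
    have E2 : N*((a-1)^2 - (a-1)*b + b^2) = 9*((n:ℚ_[3])^2 + 3*(τ:ℚ_[3])) := by
      linear_combination (N - 1 + 3*(n:ℚ_[3]))*hN + hτ
    have h3n : ‖(3:ℚ_[3])*(n:ℚ_[3])‖ ≤ 3⁻¹ := by
      rw [norm_mul, norm3]
      nlinarith [coe_norm_le n, norm_nonneg ((n:ℚ_[3]))]
    have hNnorm : ‖N‖ = 1 := by
      have hne : ‖(1:ℚ_[3])‖ ≠ ‖(3:ℚ_[3])*(n:ℚ_[3])‖ := by
        rw [norm_one]; intro h; rw [← h] at h3n; norm_num at h3n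
      rw [hN, Padic.add_eq_max_of_ne hne, norm_one,
        max_eq_left (le_trans h3n (by norm_num))]
    have h1 : ‖2*(a-1) - b‖ ≤ 3⁻¹ := by
      have hc : (3:ℚ_[3])*(n:ℚ_[3]) - 27*(τ:ℚ_[3]) = 3*(((n - 9*τ : ℤ_[3])) : ℚ_[3]) := by
        push_cast [coe_ofNat']; ring
      have := congrArg norm E1
      rw [norm_mul, hNnorm, one_mul, hc, norm_mul, norm3] at this
      rw [this]
      nlinarith [coe_norm_le (n - 9*τ), norm_nonneg (((n - 9*τ : ℤ_[3])) : ℚ_[3])]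
    have h2 : ‖(a-1)^2 - (a-1)*b + b^2‖ ≤ (9:ℝ)⁻¹ := by
      have hc : (9:ℚ_[3])*((n:ℚ_[3])^2 + 3*(τ:ℚ_[3])) = 9*(((n^2 + 3*τ : ℤ_[3])) : ℚ_[3]) := by
        push_cast [coe_ofNat']; ring
      have h9 : ‖(9:ℚ_[3])‖ = (9:ℝ)⁻¹ := by
        rw [show (9:ℚ_[3]) = 3^2 by norm_num, norm_pow, norm3]; norm_num
      have := congrArg norm E2
      rw [norm_mul, hNnorm, one_mul, hc, norm_mul, h9] at this
      rw [this]
      nlinarith [coe_norm_le (n^2 + 3*τ), norm_nonneg (((n^2 + 3*τ : ℤ_[3])) : ℚ_[3])]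
    have hb : ‖b‖ ≤ 3⁻¹ := by
      have e4 : (3:ℚ_[3])*b^2 = 4*((a-1)^2 - (a-1)*b + b^2) - (2*(a-1)-b)^2 := by ring
      have h4 : ‖(4:ℚ_[3])‖ ≤ 1 := by
        have := Padic.norm_int_le_one (p := 3) 4; push_cast at this; exact this
      have hb2 : ‖(3:ℚ_[3])*b^2‖ ≤ (9:ℝ)⁻¹ := by
        rw [e4, sub_eq_add_neg]
        refine le_trans (Padic.nonarchimedean _ _) (max_le ?_ ?_)
        · rw [norm_mul]
          nlinarith [norm_nonneg ((a-1)^2 - (a-1)*b + b^2)]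
        · rw [norm_neg, norm_pow]
          nlinarith [norm_nonneg (2*(a-1)-b)]
      rw [norm_mul, norm3, norm_pow] at hb2
      have := norm_le_zpow_of_sq (x := b) (m := -1)
      rw [show (3:ℝ)^(2*(-1:ℤ)+1) = 3⁻¹ by norm_num, show (3:ℝ)^(-1:ℤ) = 3⁻¹ by norm_num] at this
      apply this
      nlinarith [norm_nonneg b]
    have ha : ‖a - 1‖ ≤ 3⁻¹ := by
      have e5 : (2:ℚ_[3])*(a-1) = (2*(a-1)-b) + b := by ring
      have : ‖(2:ℚ_[3])*(a-1)‖ ≤ 3⁻¹ := by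
        rw [e5]
        exact le_trans (Padic.nonarchimedean _ _) (max_le h1 hb)
      rwa [norm_mul, norm2, one_mul] at this
    have he : ‖(a-1)/3‖ ≤ 1 := by
      rw [norm_div, norm3, div_le_one (by norm_num)]
      linarith
    have hf : ‖b/3‖ ≤ 1 := by
      rw [norm_div, norm3, div_le_one (by norm_num)]
      linarith
    refine ⟨algebraMap ℚ_[3] _ ((a-1)/3) + algebraMap ℚ_[3] _ (b/3) * zet,
      (isIntegral_coords _ _).mpr ⟨he, hf⟩, ?_⟩
    have k1 : (3 : CyclotomicField 3 ℚ_[3]) * algebraMap ℚ_[3] _ ((a-1)/3)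
        = algebraMap ℚ_[3] _ (a - 1) := by
      rw [h3K, ← map_mul]
      congr 1
      field_simp
    have k2 : (3 : CyclotomicField 3 ℚ_[3]) * algebraMap ℚ_[3] _ (b/3)
        = algebraMap ℚ_[3] _ b := by
      rw [h3K, ← map_mul]
      congr 1
      field_simp
    have k3 : algebraMap ℚ_[3] (CyclotomicField 3 ℚ_[3]) (a - 1)
        = algebraMap ℚ_[3] _ a - 1 := by rw [map_sub, map_one]
    linear_combination -k1 - k3 - zet * k2
  · rintro ⟨y, hy, rfl⟩
    obtain ⟨e, f, rfl⟩ := exists_repr y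
    obtain ⟨he, hf⟩ := (isIntegral_coords e f).mp hy
    obtain ⟨ee, hee⟩ : ∃ ee : ℤ_[3], (ee : ℚ_[3]) = e := ⟨⟨e, he⟩, rfl⟩
    obtain ⟨ff, hff⟩ : ∃ ff : ℤ_[3], (ff : ℚ_[3]) = f := ⟨⟨f, hf⟩, rfl⟩
    subst hee hff
    have heq : (1 : CyclotomicField 3 ℚ_[3]) +
        3 * (algebraMap ℚ_[3] _ (ee:ℚ_[3]) + algebraMap ℚ_[3] _ (ff:ℚ_[3]) * zet)
        = algebraMap ℚ_[3] _ (1 + 3*(ee:ℚ_[3])) + algebraMap ℚ_[3] _ (3*(ff:ℚ_[3])) * zet := by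
      simp only [map_add, map_mul, map_one, h3K]
      ring
    rw [heq, norm_formula, trace_formula]
    constructor
    · refine ⟨2*ee - ff + 3*ee^2 - 3*ee*ff + 3*ff^2, ?_⟩
      push_cast [coe_ofNat']
      ring
    · refine ⟨ee*ff - ee^2 + (ee^2 - ee*ff + ff^2)*(ff - 2*ee), ?_⟩
      push_cast [coe_ofNat']
      ring
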